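/- For any virtual knot K, the real crossing number c_r(K) is at least the degree of the odd writhe polynomial, where Deg f_K(t) = max{|i| : coefficient of t^i in f_K is nonzero}. At the diagram level: for any signed oriented chord diagram with n chords, every exponent N(c) appearing in f(t) satisfies |N(c)| ≤ n. -/

import Mathlib

open Finset LaurentPolynomial

/-- A signed, oriented chord diagram (combinatorial Gauss diagram) with `n` chords:
the `2*n` chord endpoints on the circle are the elements of `Fin (2*n)` in (positive)
cyclic order; chord `i` has over endpoint `c⁺ = ep (i, true)`, under endpoint
`c⁻ = ep (i, false)` and a sign (writhe) `sign i ∈ {1, -1}`. -/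
structure ChordDiagram (n : ℕ) where
  ep : Fin n × Bool ≃ Fin (2 * n)
  sign : Fin n → ℤ
  sign_unit : ∀ i, sign i = 1 ∨ sign i = -1

namespace ChordDiagram

variable {n : ℕ}

/-- the over endpoint `c⁺` of a chord -/
def overEnd (D : ChordDiagram n) (i : Fin n) : Fin (2 * n) := D.ep (i, true)

/-- the under endpoint `c⁻` of a chord -/
def under (D : ChordDiagram n) (i : Fin n) : Fin (2 * n) := D.ep (i, false)

/-- the number of steps from `b` to `x`, travelling in the positive direction
around the circle -/
def relpos (b x : Fin (2 * n)) : ℕ := (x.val + 2 * n - b.val) % (2 * n)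

/-- `x` lies strictly between the endpoints of chord `i`, on the side swept out
going from `c⁺` to `c⁻` in the positive direction -/
def StrictlyBetween (D : ChordDiagram n) (i : Fin n) (x : Fin (2 * n)) : Prop :=
  0 < relpos (D.overEnd i) x ∧ relpos (D.overEnd i) x < relpos (D.overEnd i) (D.under i)

instance (D : ChordDiagram n) (i : Fin n) (x : Fin (2 * n)) :
    Decidable (D.StrictlyBetween i x) := inferInstanceAs (Decidable (_ ∧ _))

/-- two distinct chords interlink if their endpoints alternate around the circle,
i.e. exactly one endpoint of `j` lies strictly between the endpoints of `i` -/
def Interlinks (D : ChordDiagram n) (i j : Fin n) : Prop :=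
  i ≠ j ∧ Xor' (D.StrictlyBetween i (D.overEnd j)) (D.StrictlyBetween i (D.under j))

instance (D : ChordDiagram n) (i j : Fin n) : Decidable (D.Interlinks i j) := by
  unfold Interlinks Xor'; infer_instance

/-- the number of chords interlinking chord `i` -/
def interlinkCount (D : ChordDiagram n) (i : Fin n) : ℕ :=
  (univ.filter fun j => D.Interlinks i j).card

/-- the number of chord endpoints lying (strictly) on one side of chord `i` -/
def sideCount (D : ChordDiagram n) (i : Fin n) : ℕ :=
  (univ.filter fun x => D.StrictlyBetween i x).card

/-- a chord is odd if it interlinks an odd number of other chords -/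
def OddChord (D : ChordDiagram n) (i : Fin n) : Prop := Odd (D.interlinkCount i)

instance (D : ChordDiagram n) (i : Fin n) : Decidable (D.OddChord i) :=
  inferInstanceAs (Decidable (Odd _))

/-- The label `N(a)` of the arc whose terminal point is `a`: the sum of the signs of
all chords whose over endpoint is met strictly before their under endpoint when
traversing the circle once in the positive direction starting inside this arc. -/
def arcLabel (D : ChordDiagram n) (a : Fin (2 * n)) : ℤ :=
  ∑ i ∈ univ.filter fun i => relpos a (D.overEnd i) < relpos a (D.under i), D.sign i

/-- The value `N(c)` of a chord: for a positive chord, the difference `x - y` of the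
arc labels just before `c⁺` and just before `c⁻`; for a negative chord, the difference
`z - w` of the arc labels just after `c⁺` and just after `c⁻` (the label just after an
over endpoint is the label just before it minus the sign, and the label just after an
under endpoint is the label just before it plus the sign). -/
def chordVal (D : ChordDiagram n) (i : Fin n) : ℤ :=
  if D.sign i = 1 then D.arcLabel (D.overEnd i) - D.arcLabel (D.under i)
  else (D.arcLabel (D.overEnd i) - D.sign i) - (D.arcLabel (D.under i) + D.sign i)

/-- the odd writhe `J(K) = Σ_{c odd} w(c)` -/
def oddWrithe (D : ChordDiagram n) : ℤ :=
  ∑ i ∈ univ.filter fun i => D.OddChord i, D.sign i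

/-- the odd writhe polynomial `f_K(t) = Σ_{c odd} w(c) · t^{N(c)} ∈ ℤ[t,t⁻¹]` -/
noncomputable def owp (D : ChordDiagram n) : LaurentPolynomial ℤ :=
  ∑ i ∈ univ.filter fun i => D.OddChord i, C (D.sign i) * T (D.chordVal i)

/-- evaluation of the odd writhe polynomial at a rational number `x`:
`Σ_{c odd} w(c) · x^{N(c)}` -/
def owpEval (D : ChordDiagram n) (x : ℚ) : ℚ :=
  ∑ i ∈ univ.filter fun i => D.OddChord i, (D.sign i : ℚ) * x ^ D.chordVal i

/-- the coefficient of `t^k` in a Laurent polynomial -/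
def coeffOf (f : LaurentPolynomial ℤ) (k : ℤ) : ℤ := (AddMonoidAlgebra.coeff f) k

/-- the degree `Deg f = max { |i| : coefficient of tⁱ in f is nonzero }` -/
def owpDeg (f : LaurentPolynomial ℤ) : ℕ := (AddMonoidAlgebra.coeff f).support.sup fun k => k.natAbs

/-- reversing the orientation of the knot: the cyclic order of the endpoints is
reversed, while signs and over/under data of the crossings are preserved -/
def reverse (D : ChordDiagram n) : ChordDiagram n where
  ep := D.ep.trans Fin.revPerm
  sign := D.sign
  sign_unit := D.sign_unit

/-- the mirror image: every crossing is switched, so every chord's over and under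
endpoints are exchanged and its sign is negated -/
def mirror (D : ChordDiagram n) : ChordDiagram n where
  ep := (Equiv.prodCongr (Equiv.refl (Fin n))
      ⟨fun b => !b, fun b => !b, Bool.not_not, Bool.not_not⟩).trans D.ep
  sign := fun i => -D.sign i
  sign_unit := fun i => (D.sign_unit i).elim
    (fun h => Or.inr (show -D.sign i = -1 by rw [h]))
    (fun h => Or.inl (show -D.sign i = 1 by rw [h]; ring))

/-! ### Planarity via the Euler characteristic of the carrier surface

The diagram determines a 4-valent graph (vertices = chords, edges = the `2*n` arcs of
the circle) together with a rotation system at each vertex, coming from the structure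
of a transversal crossing: for a positive crossing the counterclockwise order of the
four ends is (over-out, under-out, over-in, under-in), for a negative crossing it is
(over-out, under-in, over-in, under-out).  The diagram is realizable by a classical
(planar) knot diagram iff the resulting closed oriented carrier surface is a sphere,
i.e. iff `V - E + F = n - 2n + F = 2`.

Darts are encoded as pairs `(p, io) : Fin (2*n) × Bool`, meaning the end of an arc
at the vertex through the circle point `p`, with `io = true` for the outgoing arc
(from `p` to `p+1`) and `io = false` for the incoming arc (from `p-1` to `p`). -/

/-- the other endpoint of the chord through a given endpoint -/
def otherEnd (D : ChordDiagram n) (p : Fin (2 * n)) : Fin (2 * n) :=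
  D.ep ((D.ep.symm p).1, !(D.ep.symm p).2)

lemma otherEnd_otherEnd (D : ChordDiagram n) (p : Fin (2 * n)) :
    D.otherEnd (D.otherEnd p) = p := by
  simp [otherEnd]

/-- whether the rotation at the vertex toggles the in/out marker when passing from
the end at `p` to the end at the other endpoint of its chord -/
def tog (D : ChordDiagram n) (p : Fin (2 * n)) : Bool :=
  if D.sign (D.ep.symm p).1 = 1 then !(D.ep.symm p).2 else (D.ep.symm p).2

/-- the vertex rotation permutation on darts -/
def vertexPerm (D : ChordDiagram n) : Equiv.Perm (Fin (2 * n) × Bool) :=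
  Equiv.trans
    ⟨fun x => (x.1, xor x.2 (D.tog x.1)), fun x => (x.1, xor x.2 (D.tog x.1)),
      fun x => by simp [Bool.xor_assoc], fun x => by simp [Bool.xor_assoc]⟩
    ⟨fun x => (D.otherEnd x.1, x.2), fun x => (D.otherEnd x.1, x.2),
      fun x => by simp [otherEnd_otherEnd], fun x => by simp [otherEnd_otherEnd]⟩

/-- the edge involution on darts, matching the two ends of each arc -/
def arcPerm (D : ChordDiagram n) : Equiv.Perm (Fin (2 * n) × Bool) :=
  ⟨fun x => if x.2 then (finRotate (2 * n) x.1, false) else ((finRotate (2 * n)).symm x.1, true),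
   fun x => if x.2 then (finRotate (2 * n) x.1, false) else ((finRotate (2 * n)).symm x.1, true),
   fun x => by rcases x with ⟨p, _ | _⟩ <;> simp only [Bool.false_eq_true, if_false, if_true, Equiv.apply_symm_apply, Equiv.symm_apply_apply],
   fun x => by rcases x with ⟨p, _ | _⟩ <;> simp only [Bool.false_eq_true, if_false, if_true, Equiv.apply_symm_apply, Equiv.symm_apply_apply]⟩

/-- the face permutation on darts -/
def facePerm (D : ChordDiagram n) : Equiv.Perm (Fin (2 * n) × Bool) :=
  (D.arcPerm).trans D.vertexPerm

/-- the number of faces: the number of orbits of the face permutation -/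
noncomputable def faceCount (D : ChordDiagram n) : ℕ :=
  Nat.card (MulAction.orbitRel.Quotient (Subgroup.zpowers D.facePerm) (Fin (2 * n) × Bool))

/-- the chord diagram arises from a classical (planar) knot diagram: the carrier
surface has Euler characteristic `V - E + F = n - 2n + faceCount = 2` -/
def PlanarRealizable (D : ChordDiagram n) : Prop := D.faceCount = n + 2

end ChordDiagram


open ChordDiagram

lemma my_relpos_eq {n : ℕ} (b x : Fin (2*n)) :
    relpos b x = if b.val ≤ x.val then x.val - b.val else x.val + 2*n - b.val := by
  have hb := b.isLt; have hx := x.isLt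
  unfold relpos
  split_ifs with h
  · have h2 : x.val + 2*n - b.val = (x.val - b.val) + 2*n := by omega
    rw [h2, Nat.add_mod_right, Nat.mod_eq_of_lt (by omega)]
  · exact Nat.mod_eq_of_lt (by omega)

lemma my_cond_differs {n : ℕ} (D : ChordDiagram n) (i j : Fin n) (hij : j ≠ i) :
    ((relpos (D.overEnd i) (D.overEnd j) < relpos (D.overEnd i) (D.under j)) ↔
      (relpos (D.under i) (D.overEnd j) < relpos (D.under i) (D.under j))) ↔
    ¬ Xor' (D.StrictlyBetween i (D.overEnd j)) (D.StrictlyBetween i (D.under j)) := by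
  have hepi := D.ep.injective
  have d1 : (D.overEnd i).val ≠ (D.under i).val := by
    intro h; have := hepi (Fin.val_injective h); simp at this
  have d2 : (D.overEnd i).val ≠ (D.overEnd j).val := by
    intro h; have := hepi (Fin.val_injective h); simp at this; exact hij this.symm
  have d3 : (D.overEnd i).val ≠ (D.under j).val := by
    intro h; have := hepi (Fin.val_injective h); simp at this
  have d4 : (D.under i).val ≠ (D.overEnd j).val := by
    intro h; have := hepi (Fin.val_injective h); simp at this
  have d5 : (D.under i).val ≠ (D.under j).val := by
    intro h; have := hepi (Fin.val_injective h); simp at this; exact hij this.symm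
  have d6 : (D.overEnd j).val ≠ (D.under j).val := by
    intro h; have := hepi (Fin.val_injective h); simp at this
  have b1 := (D.overEnd i).isLt; have b2 := (D.under i).isLt
  have b3 := (D.overEnd j).isLt; have b4 := (D.under j).isLt
  unfold StrictlyBetween
  simp only [my_relpos_eq, Xor', Xor]
  split_ifs <;> omega

lemma my_chordVal_bound {n : ℕ} (D : ChordDiagram n) (i : Fin n) :
    (D.chordVal i).natAbs ≤ n := by
  have hn : 0 < n := i.pos
  set a := D.overEnd i with ha
  set b := D.under i with hb
  have hepi := D.ep.injective
  have d1 : a.val ≠ b.val := by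
    intro h; have := hepi (Fin.val_injective h); simp [ha, hb, overEnd, under] at this
  have b1 := a.isLt; have b2 := b.isLt
  set F : Fin n → ℤ := fun j =>
    (if relpos a (D.overEnd j) < relpos a (D.under j) then D.sign j else 0) -
    (if relpos b (D.overEnd j) < relpos b (D.under j) then D.sign j else 0) with hF
  have key : D.arcLabel a - D.arcLabel b = ∑ j, F j := by
    unfold arcLabel
    rw [Finset.sum_filter, Finset.sum_filter, ← Finset.sum_sub_distrib]
  have hFi : F i = D.sign i := by
    have c1 : relpos a a = 0 := by rw [my_relpos_eq]; simp
    have c2 : 0 < relpos a b := by rw [my_relpos_eq]; split_ifs <;> omega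
    have c3 : relpos b b = 0 := by rw [my_relpos_eq]; simp
    simp only [hF, ← ha, ← hb, c1, c3]
    rw [if_pos c2, if_neg (by omega)]
    ring
  have hsplit : ∑ j, F j = F i + ∑ j ∈ Finset.univ.erase i, F j := by
    rw [Finset.add_sum_erase _ F (Finset.mem_univ i)]
  have hzero : ∀ j ∈ Finset.univ.erase i, ¬ D.Interlinks i j → F j = 0 := by
    intro j hj hnil
    have hji : j ≠ i := (Finset.mem_erase.mp hj).1
    have hnx : ¬ Xor' (D.StrictlyBetween i (D.overEnd j)) (D.StrictlyBetween i (D.under j)) := by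
      intro hx; exact hnil ⟨Ne.symm hji, hx⟩
    have hiff := (my_cond_differs D i j hji).mpr hnx
    simp only [hF, ← ha, ← hb]
    by_cases hc : relpos a (D.overEnd j) < relpos a (D.under j)
    · rw [if_pos hc, if_pos (hiff.mp hc)]; ring
    · rw [if_neg hc, if_neg (fun h => hc (hiff.mpr h))]; ring
  have hrestrict : ∑ j ∈ Finset.univ.erase i, F j =
      ∑ j ∈ (Finset.univ.erase i).filter (fun j => D.Interlinks i j), F j := by
    rw [Finset.sum_filter_of_ne]
    intro x hx hFx
    by_contra hni
    exact hFx (hzero x hx hni)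
  have hFle : ∀ j, |F j| ≤ 1 := by
    intro j
    rcases D.sign_unit j with h | h <;>
      simp only [hF] <;> split_ifs <;> simp [h]
  have hsum_bound : |∑ j ∈ (Finset.univ.erase i).filter (fun j => D.Interlinks i j), F j| ≤
      ((Finset.univ.erase i).filter (fun j => D.Interlinks i j)).card := by
    calc |∑ j ∈ (Finset.univ.erase i).filter (fun j => D.Interlinks i j), F j|
        ≤ ∑ j ∈ (Finset.univ.erase i).filter (fun j => D.Interlinks i j), |F j| :=
          Finset.abs_sum_le_sum_abs _ _
      _ ≤ ((Finset.univ.erase i).filter (fun j => D.Interlinks i j)).card • (1:ℤ) :=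
          Finset.sum_le_card_nsmul _ _ 1 (fun j _ => hFle j)
      _ = _ := by simp
  have hcard : ((Finset.univ.erase i).filter (fun j => D.Interlinks i j)).card ≤ n - 1 := by
    calc ((Finset.univ.erase i).filter (fun j => D.Interlinks i j)).card
        ≤ (Finset.univ.erase i).card := Finset.card_filter_le _ _
      _ = n - 1 := by rw [Finset.card_erase_of_mem (Finset.mem_univ i)]; simp
  have hmain : |D.arcLabel a - D.arcLabel b - D.sign i| ≤ (n : ℤ) - 1 := by
    rw [key, hsplit, hFi]
    have : D.sign i + ∑ j ∈ Finset.univ.erase i, F j - D.sign i =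
        ∑ j ∈ Finset.univ.erase i, F j := by ring
    rw [this, hrestrict]
    refine le_trans hsum_bound ?_
    have : (((Finset.univ.erase i).filter (fun j => D.Interlinks i j)).card : ℤ) ≤
        ((n : ℤ) - 1) := by
      have := hcard
      omega
    exact this
  have habs := abs_le.mp hmain
  rcases D.sign_unit i with h | h <;>
    · unfold chordVal
      rw [h] at habs ⊢
      simp only [← ha, ← hb]
      norm_num
      omega

/-- for a diagram with `n` chords, every exponent `N(c)` appearing in
the odd writhe polynomial satisfies `|N(c)| ≤ n`; hence `Deg f ≤ n`, so the real
crossing number of a virtual knot is at least the degree of its odd writhe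
polynomial. -/
theorem stmt_8 {n : ℕ} (D : ChordDiagram n) :
    (∀ i : Fin n, D.OddChord i → (D.chordVal i).natAbs ≤ n) ∧ owpDeg D.owp ≤ n := by
  refine ⟨fun i _ => my_chordVal_bound D i, ?_⟩
  unfold owpDeg owp
  apply Finset.sup_le
  intro k hk
  simp only [← LaurentPolynomial.single_eq_C_mul_T, AddMonoidAlgebra.coeff_sum, AddMonoidAlgebra.coeff_single] at hk
  have hsub := Finsupp.support_finset_sum (s := Finset.univ.filter fun i => D.OddChord i)
    (f := fun i => (Finsupp.single (D.chordVal i) (D.sign i) : ℤ →₀ ℤ))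
  have hk' := hsub hk
  rw [Finset.mem_biUnion] at hk'
  obtain ⟨i, _, hki⟩ := hk'
  have := Finsupp.support_single_subset hki
  rw [Finset.mem_singleton] at this
  subst this
  exact my_chordVal_bound D i
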